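/- Define the n×n Hankel matrix H_n(p) over the polynomial ring ℝ[p_1,...,p_n] with last row ((n)·p_0, (n−1)·p_1, ..., 1·p_{n−1}) where p_0 = 1, entries constant along anti-diagonals, and zero above the main anti-diagonal; and let H_a^{(n)}(p) be the n×n matrix with the order-a Hankel matrix H_a(p) in its upper left corner and zeros elsewhere. Then the matrix whose (a,b) entry is Σ_{i=max(0,a+b−n−1)}^{min(a,b)−1} 4(a+b−1−2i)·p_i·p_{a+b−1−i} (with p_0 = 1) equals 4·Σ_{a=1}^n p_a·H_a^{(n)}(p). -/

import Mathlib

open Matrix Finset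

/-- The `n×n` block Hankel matrix `Hₐ⁽ⁿ⁾(p)`: its upper-left `a×a` block is the Hankel
matrix with last row `(a·p₀, (a-1)·p₁, …, 1·p_{a-1})`, constant along anti-diagonals and
zero above the main anti-diagonal, and it is zero outside this block. -/
noncomputable def HankelBlock (n a : ℕ) (p : ℕ → ℝ) : Matrix (Fin n) (Fin n) ℝ :=
  Matrix.of fun i j =>
    if i.1 < a ∧ j.1 < a ∧ a - 1 ≤ i.1 + j.1
    then ((a - (i.1 + j.1 - (a - 1)) : ℕ) : ℝ) * p (i.1 + j.1 - (a - 1))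
    else 0

/-- Hankel decomposition of the `Bₙ` `P`-matrix: the matrix with entries
`Σ_{i=max(0,a+b-n-1)}^{min(a,b)-1} 4(a+b-1-2i)·pᵢ·p_{a+b-1-i}` (with `p₀ = 1`)
equals `4·Σ_{a=1}^{n} pₐ·Hₐ⁽ⁿ⁾(p)`. -/
theorem Bn_P_matrix_Hankel_decomposition (n : ℕ) (p : ℕ → ℝ) (hp0 : p 0 = 1) :
    (Matrix.of fun a b : Fin n =>
        ∑ i ∈ Finset.Icc ((a.1 + 1) + (b.1 + 1) - (n + 1)) (min (a.1 + 1) (b.1 + 1) - 1),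
          ((4 * ((a.1 + 1) + (b.1 + 1) - 1 - 2 * i) : ℕ) : ℝ) * p i *
            p ((a.1 + 1) + (b.1 + 1) - 1 - i))
      = (4 : ℝ) • ∑ a ∈ Finset.Icc 1 n, p a • HankelBlock n a p := by
  ext a b
  have ha := a.isLt
  have hb := b.isLt
  simp only [Matrix.of_apply, Matrix.smul_apply, Matrix.sum_apply, smul_eq_mul, HankelBlock,
    mul_ite, mul_zero]
  rw [Finset.mul_sum]
  simp only [mul_ite, mul_zero]
  rw [← Finset.sum_filter]
  have hfs : (Finset.Icc 1 n).filter (fun c => a.1 < c ∧ b.1 < c ∧ c - 1 ≤ a.1 + b.1)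
      = Finset.Icc (max (a.1+1) (b.1+1)) (min n (a.1+b.1+1)) := by
    ext c; simp only [Finset.mem_filter, Finset.mem_Icc]; omega
  rw [hfs]
  refine Finset.sum_nbij' (i := fun i => a.1+b.1+1 - i) (j := fun c => a.1+b.1+1 - c)
    ?_ ?_ ?_ ?_ ?_
  · intro i hi; simp only [Finset.mem_Icc] at *; omega
  · intro c hc; simp only [Finset.mem_Icc] at *; omega
  · intro i hi; simp only [Finset.mem_Icc] at hi; omega
  · intro c hc; simp only [Finset.mem_Icc] at hc; omega
  · intro i hi
    simp only [Finset.mem_Icc] at hi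
    have h1 : a.1 + b.1 - (a.1 + b.1 + 1 - i - 1) = i := by omega
    have h2 : (a.1+1) + (b.1+1) - 1 - i = a.1 + b.1 + 1 - i := by omega
    have h3 : 4 * ((a.1+1) + (b.1+1) - 1 - 2*i) = 4 * ((a.1+b.1+1-i) - i) := by omega
    rw [h1, h2, h3]
    push_cast [Nat.cast_sub (by omega : i ≤ a.1+b.1+1-i)]
    ring
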